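/- Assume that for every n ≥ 1, every i = 1,2 and every pair of vertices v ∈ V_{i,n-1}, w ∈ V_{i,n}, there are more than three edges e ∈ E_{i,n} with s(e) = v and r(e) = w, and that each B_i is properly ordered: there is a unique infinite path p_i ∈ X_i all of whose edges are maximal and a unique infinite path q_i ∈ X_i all of whose edges are minimal. Then the equivalence relation R' is minimal: for every x ∈ X the class [x]_{R'} = {y ∈ X : (x,y) ∈ R'} is dense in X. -/

import Mathlib

/-!
A Bratteli diagram `B` has finite nonempty vertex sets `V n` (n ≥ 0), `V 0` a singleton,
and finite nonempty edge sets; we index edges so that `E n` is the set of edges from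
level `n` to level `n + 1` (i.e. the paper's `E_{n+1}`), with surjective source map
`src n : E n → V n` and range map `rng n : E n → V (n + 1)` having nonempty fibers.
Correspondingly, an infinite path `x` is a sequence `x 0, x 1, x 2, …` where `x n`
is the paper's `(n+1)`-th edge `x_{n+1}`; all of the paper's `1`-indexed objects
(`λ^{ij}_n`, `R_n`, `R'_n`) are re-indexed accordingly below.
-/
structure Bratteli where
  V : ℕ → Type
  E : ℕ → Type
  finV : ∀ n, Finite (V n)
  neV : ∀ n, Nonempty (V n)
  subsingletonV0 : Subsingleton (V 0)
  finE : ∀ n, Finite (E n)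
  neE : ∀ n, Nonempty (E n)
  src : ∀ n, E n → V n
  rng : ∀ n, E n → V (n + 1)
  src_surjective : ∀ n, Function.Surjective (src n)
  rng_surjective : ∀ n, Function.Surjective (rng n)

namespace Bratteli

/-- Each edge set carries the discrete topology. -/
instance (B : Bratteli) (n : ℕ) : TopologicalSpace (B.E n) := ⊥

instance (B : Bratteli) (n : ℕ) : DiscreteTopology (B.E n) := ⟨rfl⟩

instance (B : Bratteli) (n : ℕ) : Finite (B.E n) := B.finE n

/-- The infinite path space of a Bratteli diagram, topologized as a subspace of the
product of the discrete spaces `E n`. -/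
abbrev Path (B : Bratteli) : Type :=
  {x : ∀ n, B.E n // ∀ n, B.rng n (x n) = B.src (n + 1) (x (n + 1))}

end Bratteli

/-- An equivalence relation on `X`, viewed as a subset of `X × X`. -/
def IsEquivSetRel {X : Type*} (R : Set (X × X)) : Prop :=
  (∀ x, (x, x) ∈ R) ∧ (∀ x y, (x, y) ∈ R → (y, x) ∈ R) ∧
    (∀ x y z, (x, y) ∈ R → (y, z) ∈ R → (x, z) ∈ R)

/-- An ordered Bratteli diagram: each range fiber `rng⁻¹(v)` carries a linear order,
encoded as a relation `le` which is a linear order on each fiber and only relates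
edges in a common fiber. -/
structure OrderedBratteli extends Bratteli where
  le : ∀ n, E n → E n → Prop
  le_rng : ∀ (n : ℕ) (e₁ e₂ : E n), le n e₁ e₂ → rng n e₁ = rng n e₂
  le_refl : ∀ (n : ℕ) (e : E n), le n e e
  le_trans : ∀ (n : ℕ) (e₁ e₂ e₃ : E n), le n e₁ e₂ → le n e₂ e₃ → le n e₁ e₃
  le_antisymm : ∀ (n : ℕ) (e₁ e₂ : E n), le n e₁ e₂ → le n e₂ e₁ → e₁ = e₂
  le_total : ∀ (n : ℕ) (e₁ e₂ : E n), rng n e₁ = rng n e₂ → le n e₁ e₂ ∨ le n e₂ e₁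

namespace OrderedBratteli

/-- An edge is maximal if it is the largest element of its range fiber. -/
def IsMaxEdge (B : OrderedBratteli) {n : ℕ} (e : B.E n) : Prop :=
  ∀ e' : B.E n, B.rng n e' = B.rng n e → B.le n e' e

/-- An edge is minimal if it is the smallest element of its range fiber. -/
def IsMinEdge (B : OrderedBratteli) {n : ℕ} (e : B.E n) : Prop :=
  ∀ e' : B.E n, B.rng n e' = B.rng n e → B.le n e e'

end OrderedBratteli

attribute [local instance] Classical.propDecidable

variable (B₁ B₂ : OrderedBratteli)

/-- `lam00 B₁ B₂ x n` is the paper's `λ^{00}_{n+1}(x)` (with `true = 1`, `false = 0`). -/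
noncomputable def lam00 (x : B₁.Path × B₂.Path) : ℕ → Bool
  | 0 => if B₁.IsMaxEdge (x.1.val 0) then true else false
  | n + 1 =>
    if B₁.IsMaxEdge (x.1.val (n + 1)) then
      (if B₂.IsMaxEdge (x.2.val (n + 1)) then lam00 x n else true)
    else false

/-- `lam01 B₁ B₂ x n` is the paper's `λ^{01}_{n+1}(x)`. -/
noncomputable def lam01 (x : B₁.Path × B₂.Path) : ℕ → Bool
  | 0 => if B₂.IsMinEdge (x.2.val 0) then true else false
  | n + 1 =>
    if B₂.IsMinEdge (x.2.val (n + 1)) then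
      (if B₁.IsMaxEdge (x.1.val (n + 1)) then lam01 x n else true)
    else false

/-- `lam11 B₁ B₂ x n` is the paper's `λ^{11}_{n+1}(x)`. -/
noncomputable def lam11 (x : B₁.Path × B₂.Path) : ℕ → Bool
  | 0 => if B₁.IsMinEdge (x.1.val 0) then true else false
  | n + 1 =>
    if B₁.IsMinEdge (x.1.val (n + 1)) then
      (if B₂.IsMinEdge (x.2.val (n + 1)) then lam11 x n else true)
    else false

/-- `lam10 B₁ B₂ x n` is the paper's `λ^{10}_{n+1}(x)`. -/
noncomputable def lam10 (x : B₁.Path × B₂.Path) : ℕ → Bool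
  | 0 => if B₂.IsMaxEdge (x.2.val 0) then true else false
  | n + 1 =>
    if B₂.IsMaxEdge (x.2.val (n + 1)) then
      (if B₁.IsMinEdge (x.1.val (n + 1)) then lam10 x n else true)
    else false

/-- `lam B₁ B₂ i j x n` is the paper's `λ^{ij}_{n+1}(x)`, for `(i,j) ∈ {0,1}²`
(`false = 0`, `true = 1`). -/
noncomputable def lam : Bool → Bool → (B₁.Path × B₂.Path) → ℕ → Bool
  | false, false => lam00 B₁ B₂
  | false, true => lam01 B₁ B₂
  | true, true => lam11 B₁ B₂
  | true, false => lam10 B₁ B₂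

/-- The paper's relation `R_n` on `X = X₁ × X₂`: two pairs of paths are related iff
their edges agree at every level `m > n` of the paper, i.e. at every index `m ≥ n`
in our indexing. -/
def RRel (n : ℕ) : Set ((B₁.Path × B₂.Path) × (B₁.Path × B₂.Path)) :=
  {p | ∀ m, n ≤ m → p.1.1.val m = p.2.1.val m ∧ p.1.2.val m = p.2.2.val m}

/-- `RRel' B₁ B₂ n` is the paper's `R'_{n+1}`: pairs in `R_{n+1}` on which all four
functions `λ^{ij}_{n+1}` agree. -/
noncomputable def RRel' (n : ℕ) : Set ((B₁.Path × B₂.Path) × (B₁.Path × B₂.Path)) :=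
  {p ∈ RRel B₁ B₂ (n + 1) | ∀ i j : Bool, lam B₁ B₂ i j p.1 n = lam B₁ B₂ i j p.2 n}


/-! ### Auxiliary material for the proof -/

section AuxEdges

variable {B : OrderedBratteli}

lemma aux_exists_edge
    (hedge : ∀ (n : ℕ) (v : B.V n) (w : B.V (n + 1)),
      3 < Nat.card {e : B.E n // B.src n e = v ∧ B.rng n e = w})
    (n : ℕ) (v : B.V n) (w : B.V (n + 1)) : ∃ e, B.src n e = v ∧ B.rng n e = w := by
  have h := hedge n v w
  have hpos : 0 < Nat.card {e : B.E n // B.src n e = v ∧ B.rng n e = w} := by omega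
  obtain ⟨⟨e, he⟩⟩ := (Nat.card_pos_iff.mp hpos).1
  exact ⟨e, he⟩

lemma aux_not_min_of_max
    (hedge : ∀ (n : ℕ) (v : B.V n) (w : B.V (n + 1)),
      3 < Nat.card {e : B.E n // B.src n e = v ∧ B.rng n e = w})
    {n : ℕ} {e : B.E n} (hm : B.IsMaxEdge e) : ¬ B.IsMinEdge e := by
  intro hmin
  have h := hedge n (B.src n e) (B.rng n e)
  have h1 : 1 < Nat.card {e' : B.E n // B.src n e' = B.src n e ∧ B.rng n e' = B.rng n e} := by
    omega
  rw [Finite.one_lt_card_iff_nontrivial] at h1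
  obtain ⟨a, b, hab⟩ := h1
  have ha : a.1 = e := B.le_antisymm n a.1 e (hm a.1 a.2.2) (hmin a.1 a.2.2)
  have hb : b.1 = e := B.le_antisymm n b.1 e (hm b.1 b.2.2) (hmin b.1 b.2.2)
  exact hab (Subtype.ext (ha.trans hb.symm))

lemma aux_exists_max (n : ℕ) (w : B.V (n + 1)) : ∃ e, B.rng n e = w ∧ B.IsMaxEdge e := by
  haveI : Nonempty {e : B.E n // B.rng n e = w} := by
    obtain ⟨e, he⟩ := B.rng_surjective n w
    exact ⟨⟨e, he⟩⟩
  letI : LinearOrder {e : B.E n // B.rng n e = w} :=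
    { le := fun a b => B.le n a.1 b.1
      le_refl := fun a => B.le_refl n a.1
      le_trans := fun a b c => B.le_trans n a.1 b.1 c.1
      le_antisymm := fun a b h h' => Subtype.ext (B.le_antisymm n a.1 b.1 h h')
      le_total := fun a b => B.le_total n a.1 b.1 (a.2.trans b.2.symm)
      toDecidableLE := fun a b => Classical.propDecidable _ }
  obtain ⟨a, ha⟩ := Finite.exists_max (id : {e : B.E n // B.rng n e = w} → _)
  exact ⟨a.1, a.2, fun e' he' => ha ⟨e', he'.trans a.2⟩⟩

lemma aux_exists_min (n : ℕ) (w : B.V (n + 1)) : ∃ e, B.rng n e = w ∧ B.IsMinEdge e := by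
  haveI : Nonempty {e : B.E n // B.rng n e = w} := by
    obtain ⟨e, he⟩ := B.rng_surjective n w
    exact ⟨⟨e, he⟩⟩
  letI : LinearOrder {e : B.E n // B.rng n e = w} :=
    { le := fun a b => B.le n a.1 b.1
      le_refl := fun a => B.le_refl n a.1
      le_trans := fun a b c => B.le_trans n a.1 b.1 c.1
      le_antisymm := fun a b h h' => Subtype.ext (B.le_antisymm n a.1 b.1 h h')
      le_total := fun a b => B.le_total n a.1 b.1 (a.2.trans b.2.symm)
      toDecidableLE := fun a b => Classical.propDecidable _ }
  obtain ⟨a, ha⟩ := Finite.exists_min (id : {e : B.E n // B.rng n e = w} → _)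
  exact ⟨a.1, a.2, fun e' he' => ha ⟨e', he'.trans a.2⟩⟩

lemma aux_exists_neither
    (hedge : ∀ (n : ℕ) (v : B.V n) (w : B.V (n + 1)),
      3 < Nat.card {e : B.E n // B.src n e = v ∧ B.rng n e = w})
    (n : ℕ) (w : B.V (n + 1)) :
    ∃ e, B.rng n e = w ∧ ¬ B.IsMaxEdge e ∧ ¬ B.IsMinEdge e := by
  by_contra hc
  push_neg at hc
  obtain ⟨e0, he0⟩ := B.rng_surjective n w
  have h := hedge n (B.src n e0) w
  have hf : Function.Injective
      (fun a : {e : B.E n // B.src n e = B.src n e0 ∧ B.rng n e = w} =>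
        if B.IsMaxEdge a.1 then true else false) := by
    intro a b hab
    by_cases hma : B.IsMaxEdge a.1
    · by_cases hmb : B.IsMaxEdge b.1
      · exact Subtype.ext (B.le_antisymm n a.1 b.1
          (hmb a.1 (a.2.2.trans b.2.2.symm)) (hma b.1 (b.2.2.trans a.2.2.symm)))
      · simp [hma, hmb] at hab
    · by_cases hmb : B.IsMaxEdge b.1
      · simp [hma, hmb] at hab
      · have hna : B.IsMinEdge a.1 := hc a.1 a.2.2 hma
        have hnb : B.IsMinEdge b.1 := hc b.1 b.2.2 hmb
        exact Subtype.ext (B.le_antisymm n a.1 b.1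
          (hna b.1 (b.2.2.trans a.2.2.symm)) (hnb a.1 (a.2.2.trans b.2.2.symm)))
  have hle := Nat.card_le_card_of_injective _ hf
  simp only [Nat.card_eq_fintype_card, Fintype.card_bool] at hle
  omega

/-- The three possible "kinds" of an edge in an ordered Bratteli diagram. -/
inductive EKind : Type | emax | emin | eneither

/-- The predicate corresponding to an edge kind. -/
def kindP (B : OrderedBratteli) {n : ℕ} : EKind → B.E n → Prop
  | .emax, e => B.IsMaxEdge e ∧ ¬ B.IsMinEdge e
  | .emin, e => ¬ B.IsMaxEdge e ∧ B.IsMinEdge e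
  | .eneither, e => ¬ B.IsMaxEdge e ∧ ¬ B.IsMinEdge e

lemma aux_exists_kind
    (hedge : ∀ (n : ℕ) (v : B.V n) (w : B.V (n + 1)),
      3 < Nat.card {e : B.E n // B.src n e = v ∧ B.rng n e = w})
    (k : EKind) (n : ℕ) (w : B.V (n + 1)) :
    ∃ e, B.rng n e = w ∧ kindP B k e := by
  match k with
  | .emax =>
    obtain ⟨e, he, hm⟩ := aux_exists_max n w
    exact ⟨e, he, hm, aux_not_min_of_max hedge hm⟩
  | .emin =>
    obtain ⟨e, he, hm⟩ := aux_exists_min n w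
    refine ⟨e, he, fun hmax => aux_not_min_of_max hedge hmax hm, hm⟩
  | .eneither =>
    obtain ⟨e, he, h1, h2⟩ := aux_exists_neither hedge n w
    exact ⟨e, he, h1, h2⟩

end AuxEdges

/-- A path function obtained by replacing a path below level `N+3` as follows:
below `N` use `z`, at levels `N`, `N+1`, `N+2` use prescribed edges; above use `x`. -/
def buildFun (B : Bratteli) (z x : ∀ m, B.E m) (N : ℕ)
    (e0 : B.E N) (e1 : B.E (N + 1)) (e2 : B.E (N + 2)) : ∀ m, B.E m := fun m =>
  if _ : m < N then z m
  else if h : m = N then cast (congrArg B.E h).symm e0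
  else if h : m = N + 1 then cast (congrArg B.E h).symm e1
  else if h : m = N + 2 then cast (congrArg B.E h).symm e2
  else x m

section BuildFun

variable {B : Bratteli} {z x : ∀ m, B.E m} {N : ℕ}
  {e0 : B.E N} {e1 : B.E (N + 1)} {e2 : B.E (N + 2)}

lemma buildFun_lt {m : ℕ} (h : m < N) : buildFun B z x N e0 e1 e2 m = z m := dif_pos h

lemma buildFun_eq0 : buildFun B z x N e0 e1 e2 N = e0 := by
  unfold buildFun
  rw [dif_neg (lt_irrefl N), dif_pos rfl]
  rfl

lemma buildFun_eq1 : buildFun B z x N e0 e1 e2 (N + 1) = e1 := by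
  unfold buildFun
  rw [dif_neg (by omega), dif_neg (by omega), dif_pos rfl]
  rfl

lemma buildFun_eq2 : buildFun B z x N e0 e1 e2 (N + 2) = e2 := by
  unfold buildFun
  rw [dif_neg (by omega), dif_neg (by omega), dif_neg (by omega), dif_pos rfl]
  rfl

lemma buildFun_ge {m : ℕ} (h : N + 3 ≤ m) : buildFun B z x N e0 e1 e2 m = x m := by
  unfold buildFun
  rw [dif_neg (by omega), dif_neg (by omega), dif_neg (by omega), dif_neg (by omega)]

end BuildFun

/-- Main one-diagram construction: produce a path agreeing with `z` below `N`,
with `x` from `N+3` on, and whose edges at levels `N+1` and `N+2` have prescribed kinds. -/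
lemma build (B : OrderedBratteli)
    (hedge : ∀ (n : ℕ) (v : B.V n) (w : B.V (n + 1)),
      3 < Nat.card {e : B.E n // B.src n e = v ∧ B.rng n e = w})
    (x z : B.Path) (N : ℕ) (k1 k2 : EKind) :
    ∃ y : B.Path, (∀ m, m < N → y.val m = z.val m) ∧ (∀ m, N + 3 ≤ m → y.val m = x.val m) ∧
      kindP B k1 (y.val (N + 1)) ∧ kindP B k2 (y.val (N + 2)) := by
  obtain ⟨e2, he2r, he2k⟩ := aux_exists_kind hedge k2 (N + 2) (B.src (N + 3) (x.val (N + 3)))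
  obtain ⟨e1, he1r, he1k⟩ := aux_exists_kind hedge k1 (N + 1) (B.src (N + 2) e2)
  obtain ⟨e0, he0s, he0r⟩ := aux_exists_edge hedge N
    (Nat.casesOn N (motive := fun n => B.V n) (Classical.choice (B.neV 0))
      (fun n => B.rng n (z.val n)))
    (B.src (N + 1) e1)
  refine ⟨⟨buildFun B.toBratteli z.val x.val N e0 e1 e2, ?_⟩, ?_, ?_, ?_, ?_⟩
  · intro m
    rcases Nat.lt_or_ge (m + 1) N with h | h
    · rw [buildFun_lt h, buildFun_lt (by omega)]
      exact z.2 m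
    rcases Nat.eq_or_lt_of_le h with h' | h'
    · subst h'
      rw [buildFun_lt (by omega), buildFun_eq0]
      exact he0s.symm
    by_cases hm0 : m = N
    · subst hm0
      rw [buildFun_eq0, buildFun_eq1]
      exact he0r
    by_cases hm1 : m = N + 1
    · subst hm1
      rw [buildFun_eq1, buildFun_eq2]
      exact he1r
    by_cases hm2 : m = N + 2
    · subst hm2
      rw [buildFun_eq2, buildFun_ge (by omega)]
      exact he2r
    · rw [buildFun_ge (by omega), buildFun_ge (by omega)]
      exact x.2 m
  · intro m hm
    exact buildFun_lt hm
  · intro m hm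
    exact buildFun_ge hm
  · show kindP B k1 (buildFun B.toBratteli z.val x.val N e0 e1 e2 (N + 1))
    rw [buildFun_eq1]
    exact he1k
  · show kindP B k2 (buildFun B.toBratteli z.val x.val N e0 e1 e2 (N + 2))
    rw [buildFun_eq2]
    exact he2k

section LamLemmas

lemma lam00_max {x : B₁.Path × B₂.Path} {n : ℕ} (h : lam00 B₁ B₂ x (n + 1) = true) :
    B₁.IsMaxEdge (x.1.val (n + 1)) := by
  by_contra hm
  rw [lam00, if_neg hm] at h
  exact Bool.false_ne_true h

lemma lam01_min {x : B₁.Path × B₂.Path} {n : ℕ} (h : lam01 B₁ B₂ x (n + 1) = true) :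
    B₂.IsMinEdge (x.2.val (n + 1)) := by
  by_contra hm
  rw [lam01, if_neg hm] at h
  exact Bool.false_ne_true h

lemma lam11_min {x : B₁.Path × B₂.Path} {n : ℕ} (h : lam11 B₁ B₂ x (n + 1) = true) :
    B₁.IsMinEdge (x.1.val (n + 1)) := by
  by_contra hm
  rw [lam11, if_neg hm] at h
  exact Bool.false_ne_true h

lemma lam10_max {x : B₁.Path × B₂.Path} {n : ℕ} (h : lam10 B₁ B₂ x (n + 1) = true) :
    B₂.IsMaxEdge (x.2.val (n + 1)) := by
  by_contra hm
  rw [lam10, if_neg hm] at h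
  exact Bool.false_ne_true h

end LamLemmas

/-- The key combinatorial step: any point can be modified below any level `N` to match
a given point `z` there, while staying `R'_{N+2}`-equivalent to the original point. -/
lemma key_step
    (hedge₁ : ∀ (n : ℕ) (v : B₁.V n) (w : B₁.V (n + 1)),
      3 < Nat.card {e : B₁.E n // B₁.src n e = v ∧ B₁.rng n e = w})
    (hedge₂ : ∀ (n : ℕ) (v : B₂.V n) (w : B₂.V (n + 1)),
      3 < Nat.card {e : B₂.E n // B₂.src n e = v ∧ B₂.rng n e = w})
    (x z : B₁.Path × B₂.Path) (N : ℕ) :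
    ∃ y : B₁.Path × B₂.Path, (∀ m, m < N → y.1.val m = z.1.val m ∧ y.2.val m = z.2.val m) ∧
      (x, y) ∈ RRel' B₁ B₂ (N + 2) := by
  obtain ⟨y₁, hz₁, hx₁, hM₁, hT₁⟩ := build B₁ hedge₁ x.1 z.1 N
    (if lam00 B₁ B₂ x (N + 2) = true ∧ lam10 B₁ B₂ x (N + 2) = true then .emax
      else if lam01 B₁ B₂ x (N + 2) = true ∧ lam11 B₁ B₂ x (N + 2) = true then .emin
      else .eneither)
    (if lam00 B₁ B₂ x (N + 2) = true then .emax
      else if lam11 B₁ B₂ x (N + 2) = true then .emin else .eneither)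
  obtain ⟨y₂, hz₂, hx₂, hM₂, hT₂⟩ := build B₂ hedge₂ x.2 z.2 N
    (if lam00 B₁ B₂ x (N + 2) = true ∧ lam01 B₁ B₂ x (N + 2) = true then .emin
      else if lam10 B₁ B₂ x (N + 2) = true ∧ lam11 B₁ B₂ x (N + 2) = true then .emax
      else .eneither)
    (if lam01 B₁ B₂ x (N + 2) = true then .emin
      else if lam10 B₁ B₂ x (N + 2) = true then .emax else .eneither)
  refine ⟨(y₁, y₂), fun m hm => ⟨hz₁ m hm, hz₂ m hm⟩,
    fun m hm => ⟨(hx₁ m hm).symm, (hx₂ m hm).symm⟩, ?_⟩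
  cases h00 : lam00 B₁ B₂ x (N + 2) <;> cases h01 : lam01 B₁ B₂ x (N + 2) <;>
    cases h11 : lam11 B₁ B₂ x (N + 2) <;> cases h10 : lam10 B₁ B₂ x (N + 2) <;>
    simp only [h00, h01, h11, h10] at hM₁ hT₁ hM₂ hT₂ <;>
    simp only [kindP, Bool.false_eq_true, Bool.true_eq_false, eq_self_iff_true, true_and,
      and_true, false_and, and_false, and_self, if_true, if_false, ite_true, ite_false,
      not_false_iff, if_neg, not_false_eq_true] at hM₁ hT₁ hM₂ hT₂ <;>
    first
      | exact absurd (lam11_min B₁ B₂ h11)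
          (aux_not_min_of_max hedge₁ (lam00_max B₁ B₂ h00))
      | exact absurd (lam01_min B₁ B₂ h01)
          (aux_not_min_of_max hedge₂ (lam10_max B₁ B₂ h10))
      | (intro i j; cases i <;> cases j <;> simp only [lam] <;>
          first
            | (rw [h00]; simp [lam00, hM₁, hT₁, hM₂, hT₂]; done)
            | (rw [h01]; simp [lam01, hM₁, hT₁, hM₂, hT₂]; done)
            | (rw [h10]; simp [lam10, hM₁, hT₁, hM₂, hT₂]; done)
            | (rw [h11]; simp [lam11, hM₁, hT₁, hM₂, hT₂]; done))

/-- The path space of a Bratteli diagram is compact. -/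
lemma path_compactSpace (B : Bratteli) : CompactSpace B.Path := by
  have hclosed : IsClosed {x : ∀ n, B.E n | ∀ n, B.rng n (x n) = B.src (n + 1) (x (n + 1))} := by
    have heq : {x : ∀ n, B.E n | ∀ n, B.rng n (x n) = B.src (n + 1) (x (n + 1))} =
        ⋂ n, {x : ∀ n, B.E n | B.rng n (x n) = B.src (n + 1) (x (n + 1))} := by
      ext x
      simp only [Set.mem_setOf_eq, Set.mem_iInter]
    rw [heq]
    refine isClosed_iInter fun n => ?_
    have heq2 : {x : ∀ n, B.E n | B.rng n (x n) = B.src (n + 1) (x (n + 1))} =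
        (fun x : ∀ n, B.E n => (x n, x (n + 1))) ⁻¹'
          {p : B.E n × B.E (n + 1) | B.rng n p.1 = B.src (n + 1) p.2} := rfl
    rw [heq2]
    exact IsClosed.preimage ((continuous_apply n).prodMk (continuous_apply (n + 1)))
      (isClosed_discrete _)
  exact isCompact_iff_compactSpace.mp hclosed.isCompact

/-- Every open neighborhood contains a cylinder neighborhood. -/
lemma exists_cylinder_subset {U : Set (B₁.Path × B₂.Path)} (hU : IsOpen U)
    {z : B₁.Path × B₂.Path} (hz : z ∈ U) :
    ∃ M : ℕ,
      {y : B₁.Path × B₂.Path | ∀ m, m < M → y.1.val m = z.1.val m ∧ y.2.val m = z.2.val m}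
        ⊆ U := by
  haveI := path_compactSpace B₁.toBratteli
  haveI := path_compactSpace B₂.toBratteli
  set C : ℕ → Set (B₁.Path × B₂.Path) := fun M =>
    {y | ∀ m, m < M → y.1.val m = z.1.val m ∧ y.2.val m = z.2.val m} with hCdef
  have hclosed : ∀ M, IsClosed (C M) := by
    intro M
    have heq : C M = ⋂ m, ⋂ (_ : m < M),
        ({y : B₁.Path × B₂.Path | y.1.val m = z.1.val m} ∩
          {y : B₁.Path × B₂.Path | y.2.val m = z.2.val m}) := by
      ext y
      simp only [hCdef, Set.mem_setOf_eq, Set.mem_iInter, Set.mem_inter_iff]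
    rw [heq]
    refine isClosed_iInter fun m => isClosed_iInter fun _ => IsClosed.inter ?_ ?_
    · exact isClosed_eq
        ((continuous_apply m).comp (continuous_subtype_val.comp continuous_fst))
        continuous_const
    · exact isClosed_eq
        ((continuous_apply m).comp (continuous_subtype_val.comp continuous_snd))
        continuous_const
  have hdir : Directed (· ⊇ ·) C := by
    intro a b
    refine ⟨max a b, fun y hy m hm => hy m (lt_of_lt_of_le hm (le_max_left a b)),
      fun y hy m hm => hy m (lt_of_lt_of_le hm (le_max_right a b))⟩
  have hsub : ⋂ M, C M ⊆ {z} := by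
    intro y hy
    have h : ∀ m, y.1.val m = z.1.val m ∧ y.2.val m = z.2.val m := fun m =>
      (Set.mem_iInter.mp hy (m + 1)) m (Nat.lt_succ_self m)
    have h1 : y.1 = z.1 := Subtype.ext (funext fun m => (h m).1)
    have h2 : y.2 = z.2 := Subtype.ext (funext fun m => (h m).2)
    exact Set.mem_singleton_iff.mpr (Prod.ext h1 h2)
  have hempty : Uᶜ ∩ ⋂ M, C M = ∅ := by
    rw [Set.eq_empty_iff_forall_notMem]
    rintro y ⟨hyc, hyi⟩
    exact hyc (Set.mem_singleton_iff.mp (hsub hyi) ▸ hz)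
  obtain ⟨M, hM⟩ := (hU.isClosed_compl.isCompact).elim_directed_family_closed C hclosed
    hempty hdir
  refine ⟨M, fun y hy => ?_⟩
  by_contra hyU
  exact Set.eq_empty_iff_forall_notMem.mp hM y ⟨hyU, hy⟩

/-!
STATEMENT 7 (the paper's Lemma 2.4). Assume any two vertices in consecutive levels of
each diagram are joined by more than three edges, and that each diagram is properly
ordered: there is a unique infinite path `pᵢ` all of whose edges are maximal and a
unique infinite path `qᵢ` all of whose edges are minimal. Then `R' = ⋃ n, R'_n` is
minimal: every `R'`-class is dense in `X = X₁ × X₂`.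
-/
theorem RRel'_minimal
    (hedge₁ : ∀ (n : ℕ) (v : B₁.V n) (w : B₁.V (n + 1)),
      3 < Nat.card {e : B₁.E n // B₁.src n e = v ∧ B₁.rng n e = w})
    (hedge₂ : ∀ (n : ℕ) (v : B₂.V n) (w : B₂.V (n + 1)),
      3 < Nat.card {e : B₂.E n // B₂.src n e = v ∧ B₂.rng n e = w})
    (p₁ : B₁.Path) (hp₁ : ∀ n, B₁.IsMaxEdge (p₁.val n))
    (hp₁uniq : ∀ p : B₁.Path, (∀ n, B₁.IsMaxEdge (p.val n)) → p = p₁)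
    (q₁ : B₁.Path) (hq₁ : ∀ n, B₁.IsMinEdge (q₁.val n))
    (hq₁uniq : ∀ q : B₁.Path, (∀ n, B₁.IsMinEdge (q.val n)) → q = q₁)
    (p₂ : B₂.Path) (hp₂ : ∀ n, B₂.IsMaxEdge (p₂.val n))
    (hp₂uniq : ∀ p : B₂.Path, (∀ n, B₂.IsMaxEdge (p.val n)) → p = p₂)
    (q₂ : B₂.Path) (hq₂ : ∀ n, B₂.IsMinEdge (q₂.val n))
    (hq₂uniq : ∀ q : B₂.Path, (∀ n, B₂.IsMinEdge (q.val n)) → q = q₂)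
    (x : B₁.Path × B₂.Path) :
    Dense {y : B₁.Path × B₂.Path | (x, y) ∈ ⋃ n, RRel' B₁ B₂ n} := by
  rw [dense_iff_inter_open]
  intro U hU hUne
  obtain ⟨z, hz⟩ := hUne
  obtain ⟨M, hM⟩ := exists_cylinder_subset B₁ B₂ hU hz
  obtain ⟨y, hyz, hyR⟩ := key_step B₁ B₂ hedge₁ hedge₂ x z M
  exact ⟨y, hM hyz, Set.mem_iUnion.mpr ⟨M + 2, hyR⟩⟩
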